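/- arXiv:1309.7627 — 5 statements merged into one kernel-verified Lean document; each statement's English description precedes it below -/
import Mathlib

section
/- For |λ| = 1, a sequence y ∈ ℓ²(ℕ) of the form yₙ = λⁿ⁺¹ wₙ lies in the range of S* − λI only if Σₙ wₙ converges; consequently, for the sequences w with wₙ = 2^{-k} at positions forming sufficiently sparse gaps (e.g. w has entry 1/2ᵏ at position 2^{2ᵏ} and zeros elsewhere), the corresponding y is not in the range of S* − λI. -/
open scoped ENNReal

noncomputable abbrev H2 := lp (fun _ : ℕ => ℂ) 2

open Classical in
/-- The sparse sequence with entry 1/2ᵏ at position 2^(2ᵏ) and zeros elsewhere. -/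
noncomputable def sparseW (n : ℕ) : ℂ :=
  if h : ∃ k : ℕ, n = 2 ^ (2 ^ k) then (1 / 2 : ℂ) ^ Nat.find h else 0

open Classical in
/-- Real version of `sparseW`. -/
noncomputable def sparseWR (n : ℕ) : ℝ :=
  if h : ∃ k : ℕ, n = 2 ^ (2 ^ k) then (1 / 2 : ℝ) ^ Nat.find h else 0

lemma sparseW_eq_coe (n : ℕ) : sparseW n = (sparseWR n : ℂ) := by
  classical
  unfold sparseW sparseWR
  split_ifs with h
  · push_cast; ring
  · simp

lemma sparseWR_nonneg (n : ℕ) : 0 ≤ sparseWR n := by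
  classical
  unfold sparseWR
  split_ifs with h
  · positivity
  · exact le_rfl

lemma pos_injective : Function.Injective (fun k : ℕ => 2 ^ (2 ^ k)) := by
  intro a b hab
  simpa using Nat.pow_right_injective (le_refl 2)
    (Nat.pow_right_injective (le_refl 2) hab)

lemma sparseWR_apply (k : ℕ) : sparseWR (2 ^ (2 ^ k)) = (1 / 2 : ℝ) ^ k := by
  classical
  unfold sparseWR
  have h : ∃ j : ℕ, 2 ^ (2 ^ k) = 2 ^ (2 ^ j) := ⟨k, rfl⟩
  rw [dif_pos h]
  congr 1
  exact (pos_injective (Nat.find_spec h).symm)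

lemma sparseWR_eq_zero {n : ℕ} (h : ∀ k : ℕ, n ≠ 2 ^ (2 ^ k)) : sparseWR n = 0 := by
  classical
  unfold sparseWR
  rw [dif_neg]
  push_neg
  exact h

lemma summable_aux (f : ℕ → ℝ) (hf : ∀ k, f ((fun k : ℕ => 2 ^ (2 ^ k)) k) = (1/2:ℝ)^k)
    (hz : ∀ n, (∀ k : ℕ, n ≠ 2 ^ (2 ^ k)) → f n = 0) : Summable f := by
  rw [← Function.Injective.summable_iff pos_injective]
  · have he : (f ∘ fun k : ℕ => 2 ^ 2 ^ k) = fun k => (1/2:ℝ)^k := funext hf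
    rw [he]
    exact summable_geometric_of_lt_one (by norm_num) (by norm_num)
  · intro n hn
    exact hz n (fun k hk => hn ⟨k, hk.symm⟩)

lemma summable_sparseWR : Summable sparseWR :=
  summable_aux _ sparseWR_apply (fun _ h => sparseWR_eq_zero h)

lemma summable_sparseWR_sq : Summable (fun n => sparseWR n ^ 2) := by
  refine Summable.of_nonneg_of_le (fun n => sq_nonneg _) (fun n => ?_) summable_sparseWR
  have h1 : sparseWR n ≤ 1 := by
    classical
    unfold sparseWR
    split_ifs with h
    · exact pow_le_one₀ (by norm_num) (by norm_num)
    · norm_num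
  nlinarith [sparseWR_nonneg n]

lemma key_lemma (l : ℂ) (hl : ‖l‖ = 1) (w : ℕ → ℂ) (x : H2)
    (hrec : ∀ n : ℕ, x (n + 1) = l * x n + l ^ (n + 1) * w n) :
    (∀ N : ℕ, ‖x N‖ = ‖x 0 + ∑ n ∈ Finset.range N, w n‖) ∧
    Filter.Tendsto (fun N : ℕ => ∑ n ∈ Finset.range N, w n)
      Filter.atTop (nhds (-(x 0))) := by
  have hfor : ∀ N : ℕ, x N = l ^ N * (x 0 + ∑ n ∈ Finset.range N, w n) := by
    intro N
    induction N with
    | zero => simp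
    | succ N ih => rw [hrec N, ih, Finset.sum_range_succ]; ring
  have hnorm : ∀ N : ℕ, ‖x N‖ = ‖x 0 + ∑ n ∈ Finset.range N, w n‖ := by
    intro N
    rw [hfor N, norm_mul, norm_pow, hl, one_pow, one_mul]
  refine ⟨hnorm, ?_⟩
  have hsum : Summable (fun n => ‖x n‖ ^ 2) := by
    have h := (lp.memℓp x).summable (p := 2) (by norm_num)
    have he : ∀ n : ℕ, ‖x n‖ ^ (2 : ℝ≥0∞).toReal = ‖x n‖ ^ 2 := by
      intro n
      rw [show (2 : ℝ≥0∞).toReal = ((2 : ℕ) : ℝ) by norm_num, Real.rpow_natCast]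
    simpa [he] using h
  have hx0 : Filter.Tendsto (fun n : ℕ => ‖x n‖) Filter.atTop (nhds 0) := by
    have h2 := hsum.tendsto_atTop_zero
    have h3 := h2.sqrt
    rw [Real.sqrt_zero] at h3
    convert h3 using 2 with n
    rw [Real.sqrt_sq (norm_nonneg _)]
  have htend : Filter.Tendsto (fun N : ℕ => x 0 + ∑ n ∈ Finset.range N, w n)
      Filter.atTop (nhds 0) := by
    rw [tendsto_zero_iff_norm_tendsto_zero]
    convert hx0 using 2 with N
    exact (hnorm N).symm
  have := htend.sub_const (x 0)
  simpa using this

/-- Extract the recurrence from membership in the range. -/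
lemma rec_of_range (l : ℂ) (S : H2 →L[ℂ] H2) (hS : ∀ (x : H2) (n : ℕ), S x n = x (n + 1))
    (w : ℕ → ℂ) (y : H2) (hy : ∀ n : ℕ, y n = l ^ (n + 1) * w n) (x : H2)
    (hx : (S - l • (1 : H2 →L[ℂ] H2)) x = y) :
    ∀ n : ℕ, x (n + 1) = l * x n + l ^ (n + 1) * w n := by
  intro n
  have h1 : ((S - l • (1 : H2 →L[ℂ] H2)) x) n = y n := by rw [hx]
  rw [ContinuousLinearMap.sub_apply, ContinuousLinearMap.smul_apply,
    ContinuousLinearMap.one_apply] at h1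
  rw [lp.coeFn_sub, Pi.sub_apply, lp.coeFn_smul, Pi.smul_apply, smul_eq_mul, hS,
    hy n] at h1
  linear_combination h1

/-- For |λ| = 1, a sequence y ∈ ℓ²(ℕ) of the form yₙ = λⁿ⁺¹wₙ lies in the range of
S* − λI only if Σₙ wₙ converges; and for the sparse sequence `sparseW` the
corresponding y ∈ ℓ²(ℕ) is not in the range of S* − λI. -/
theorem range_backward_shift_sub (l : ℂ) (hl : ‖l‖ = 1)
    (S : H2 →L[ℂ] H2) (hS : ∀ (x : H2) (n : ℕ), S x n = x (n + 1)) :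
    (∀ (w : ℕ → ℂ) (y : H2), (∀ n : ℕ, y n = l ^ (n + 1) * w n) →
      y ∈ Set.range ⇑(S - l • (1 : H2 →L[ℂ] H2)) →
      ∃ s : ℂ, Filter.Tendsto (fun N : ℕ => ∑ n ∈ Finset.range N, w n)
        Filter.atTop (nhds s)) ∧
    (∃ y : H2, (∀ n : ℕ, y n = l ^ (n + 1) * sparseW n) ∧
      y ∉ Set.range ⇑(S - l • (1 : H2 →L[ℂ] H2))) := by
  constructor
  · rintro w y hy ⟨x, hx⟩
    exact ⟨-(x 0), (key_lemma l hl w x (rec_of_range l S hS w y hy x hx)).2⟩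
  · -- construct y
    have hnorm_sw : ∀ n : ℕ, ‖(fun n => l ^ (n + 1) * sparseW n) n‖ = sparseWR n := by
      intro n
      simp only [sparseW_eq_coe, norm_mul, norm_pow, hl, one_pow, one_mul,
        Complex.norm_real]
      exact abs_of_nonneg (sparseWR_nonneg n)
    have hmem : Memℓp (fun n : ℕ => l ^ (n + 1) * sparseW n) 2 := by
      apply memℓp_gen
      have he : (fun n : ℕ => ‖(fun n => l ^ (n + 1) * sparseW n) n‖ ^ (2 : ℝ≥0∞).toReal)
          = fun n => sparseWR n ^ 2 := by
        funext n
        rw [hnorm_sw n, show (2 : ℝ≥0∞).toReal = ((2 : ℕ) : ℝ) by norm_num,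
          Real.rpow_natCast]
      rw [he]
      exact summable_sparseWR_sq
    refine ⟨⟨_, hmem⟩, fun n => rfl, ?_⟩
    rintro ⟨x, hx⟩
    have hrec := rec_of_range l S hS sparseW ⟨_, hmem⟩ (fun n => rfl) x hx
    obtain ⟨hnorm, htend⟩ := key_lemma l hl sparseW x hrec
    -- the sum of sparseW converges to (t : ℂ)
    set t : ℝ := ∑' n, sparseWR n with ht
    have htend2 : Filter.Tendsto (fun N : ℕ => ∑ n ∈ Finset.range N, sparseW n)
        Filter.atTop (nhds ((t : ℂ))) := by
      have h1 := summable_sparseWR.hasSum.tendsto_sum_nat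
      have h2 := (Complex.continuous_ofReal.tendsto t).comp h1
      convert h2 using 2 with N
      simp [sparseW_eq_coe, Function.comp]
    have hx0 : x 0 = -(t : ℂ) := by
      have := tendsto_nhds_unique htend htend2
      linear_combination -this
    -- lower bound on ‖x N‖
    have htail : ∀ k N : ℕ, N ≤ 2 ^ (2 ^ k) →
        ∑ n ∈ Finset.range N, sparseWR n + (1 / 2 : ℝ) ^ k ≤ t := by
      intro k N hN
      have hmemk : (2 : ℕ) ^ (2 ^ k) ∉ Finset.range N := by
        simp only [Finset.mem_range, not_lt]
        exact hN
      have h1 : ∑ n ∈ insert (2 ^ (2 ^ k)) (Finset.range N), sparseWR n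
          = sparseWR (2 ^ (2 ^ k)) + ∑ n ∈ Finset.range N, sparseWR n :=
        Finset.sum_insert hmemk
      have h2 : ∑ n ∈ insert (2 ^ (2 ^ k)) (Finset.range N), sparseWR n ≤ t :=
        Summable.sum_le_tsum _ (fun n _ => sparseWR_nonneg n) summable_sparseWR
      rw [h1, sparseWR_apply k] at h2
      linarith
    have hlow : ∀ k N : ℕ, N ≤ 2 ^ (2 ^ k) → (1 / 2 : ℝ) ^ k ≤ ‖x N‖ := by
      intro k N hN
      have h1 : ‖x N‖ = ‖((∑ n ∈ Finset.range N, sparseWR n - t : ℝ) : ℂ)‖ := by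
        rw [hnorm N, hx0]
        congr 1
        push_cast [sparseW_eq_coe]
        ring
      rw [h1, Complex.norm_real, Real.norm_eq_abs, abs_sub_comm,
        abs_of_nonneg (by linarith [htail k N hN, pow_pos (by norm_num : (0:ℝ) < 1/2) k])]
      linarith [htail k N hN]
    -- summability of ‖x n‖^2 bounds partial sums
    have hsum : Summable (fun n => ‖x n‖ ^ 2) := by
      have h := (lp.memℓp x).summable (p := 2) (by norm_num)
      have he : ∀ n : ℕ, ‖x n‖ ^ (2 : ℝ≥0∞).toReal = ‖x n‖ ^ 2 := by
        intro n
        rw [show (2 : ℝ≥0∞).toReal = ((2 : ℕ) : ℝ) by norm_num, Real.rpow_natCast]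
      simpa [he] using h
    set C : ℝ := ∑' n, ‖x n‖ ^ 2 with hC
    have hCb : ∀ k : ℕ, ((2 : ℝ) ^ (2 ^ k) + 1) * ((1 / 2 : ℝ) ^ k) ^ 2 ≤ C := by
      intro k
      have hcard : ∀ i ∈ Finset.range (2 ^ (2 ^ k) + 1),
          ((1 / 2 : ℝ) ^ k) ^ 2 ≤ ‖x i‖ ^ 2 := by
        intro i hi
        have : i ≤ 2 ^ (2 ^ k) := by simpa [Nat.lt_succ_iff] using hi
        have h2 := hlow k i this
        have h3 : (0:ℝ) ≤ (1/2:ℝ)^k := by positivity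
        nlinarith
      have h1 := Finset.card_nsmul_le_sum _ _ _ hcard
      have h2 : ∑ i ∈ Finset.range (2 ^ (2 ^ k) + 1), ‖x i‖ ^ 2 ≤ C :=
        Summable.sum_le_tsum _ (fun n _ => sq_nonneg _) hsum
      rw [Finset.card_range, nsmul_eq_mul] at h1
      push_cast at h1
      linarith
    -- derive contradiction
    have hgrow : ∀ k : ℕ, 4 ≤ k → (2 : ℝ) ^ k ≤ ((2 : ℝ) ^ (2 ^ k) + 1) * ((1 / 2 : ℝ) ^ k) ^ 2 := by
      intro k hk
      have h3k : 3 * k ≤ 2 ^ k := by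
        induction k with
        | zero => omega
        | succ n ih =>
          rcases Nat.lt_or_ge n 4 with h | h
          · interval_cases n <;> simp_all <;> omega
          · have := ih (by omega)
            have h2 : (2:ℕ) ^ 4 ≤ 2 ^ n := Nat.pow_le_pow_right (by norm_num) h
            have h4 : (2:ℕ) ^ (n + 1) = 2 * 2 ^ n := by ring
            omega
      have hkey : (2 : ℝ) ^ (3 * k) ≤ (2 : ℝ) ^ (2 ^ k) :=
        pow_le_pow_right₀ (by norm_num) h3k
      have hhalf : ((1 / 2 : ℝ) ^ k) ^ 2 = ((2 : ℝ) ^ (2 * k))⁻¹ := by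
        rw [← pow_mul, one_div, inv_pow, mul_comm]
      rw [hhalf]
      have e2 : (2:ℝ) ^ (3 * k) * ((2:ℝ) ^ (2 * k))⁻¹ = 2 ^ k := by
        rw [show 3 * k = k + 2 * k by ring, pow_add, mul_assoc,
          mul_inv_cancel₀ (by positivity), mul_one]
      calc (2:ℝ) ^ k = 2 ^ (3 * k) * ((2:ℝ) ^ (2 * k))⁻¹ := e2.symm
        _ ≤ 2 ^ (2 ^ k) * ((2:ℝ) ^ (2 * k))⁻¹ :=
            mul_le_mul_of_nonneg_right hkey (by positivity)
        _ ≤ ((2:ℝ) ^ (2 ^ k) + 1) * ((2:ℝ) ^ (2 * k))⁻¹ :=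
            mul_le_mul_of_nonneg_right (by linarith) (by positivity)
    obtain ⟨k0, hk0⟩ := pow_unbounded_of_one_lt C (by norm_num : (1:ℝ) < 2)
    set k := max k0 4 with hk
    have h1 : (2:ℝ) ^ k0 ≤ (2:ℝ) ^ k := pow_le_pow_right₀ (by norm_num) (le_max_left _ _)
    have h2 := hgrow k (le_max_right _ _)
    have h3 := hCb k
    linarith
end

section
/- Let φ be a function continuous on the closed unit disc and analytic on the open disc (φ in the disc algebra). If φ(λ) = μ for some λ, μ on the unit circle, then μ belongs to the essential spectrum of the operator φ(S*) on ℓ²(ℕ). -/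
def IsFredholm (T : H2 →L[ℂ] H2) : Prop :=
  FiniteDimensional ℂ (LinearMap.ker (T : H2 →ₗ[ℂ] H2)) ∧
  IsClosed (LinearMap.range (T : H2 →ₗ[ℂ] H2) : Set H2) ∧
  FiniteDimensional ℂ (H2 ⧸ LinearMap.range (T : H2 →ₗ[ℂ] H2))

open Filter
open scoped ENNReal NNReal



lemma memℓp_geom {l : ℂ} (hl : ‖l‖ < 1) :
    Memℓp (fun n : ℕ => ((Real.sqrt (1 - ‖l‖ ^ 2) : ℝ) : ℂ) * l ^ n) 2 := by
  apply memℓp_gen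
  have h2 : (2 : ℝ≥0∞).toReal = ((2 : ℕ) : ℝ) := by norm_num
  rw [h2]
  simp_rw [Real.rpow_natCast]
  have : ∀ n : ℕ, ‖((Real.sqrt (1 - ‖l‖ ^ 2) : ℝ) : ℂ) * l ^ n‖ ^ (2:ℕ)
      = ‖((Real.sqrt (1 - ‖l‖ ^ 2) : ℝ) : ℂ)‖ ^ 2 * (‖l‖ ^ 2) ^ n := by
    intro n; rw [norm_mul, mul_pow, norm_pow]; ring
  simp_rw [this]
  exact (summable_geometric_of_lt_one (by positivity) (by nlinarith [norm_nonneg l])).mul_left _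

noncomputable def xvec (l : ℂ) (hl : ‖l‖ < 1) : H2 :=
  ⟨fun n : ℕ => ((Real.sqrt (1 - ‖l‖ ^ 2) : ℝ) : ℂ) * l ^ n, memℓp_geom hl⟩

lemma xvec_apply (l : ℂ) (hl : ‖l‖ < 1) (n : ℕ) :
    (xvec l hl) n = ((Real.sqrt (1 - ‖l‖ ^ 2) : ℝ) : ℂ) * l ^ n := rfl

lemma norm_xvec (l : ℂ) (hl : ‖l‖ < 1) : ‖xvec l hl‖ = 1 := by
  have hpos : (0:ℝ) < 1 - ‖l‖ ^ 2 := by nlinarith [norm_nonneg l]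
  have h2 : (0:ℝ) < (2 : ℝ≥0∞).toReal := by norm_num
  have key : ‖xvec l hl‖ ^ (2 : ℝ≥0∞).toReal = 1 := by
    rw [lp.norm_rpow_eq_tsum h2]
    have h2' : (2 : ℝ≥0∞).toReal = ((2 : ℕ) : ℝ) := by norm_num
    have hterm : ∀ n : ℕ, ‖(xvec l hl) n‖ ^ (2 : ℝ≥0∞).toReal
        = (1 - ‖l‖ ^ 2) * (‖l‖ ^ 2) ^ n := by
      intro n
      rw [h2', Real.rpow_natCast, xvec_apply, norm_mul, mul_pow, norm_pow,
        Complex.norm_real, Real.norm_eq_abs, abs_of_nonneg (Real.sqrt_nonneg _),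
        Real.sq_sqrt hpos.le]
      ring
    simp_rw [hterm]
    rw [tsum_mul_left, tsum_geometric_of_lt_one (by positivity) (by nlinarith [norm_nonneg l])]
    rw [mul_inv_cancel₀ (by positivity)]
  have hnn : 0 ≤ ‖xvec l hl‖ := norm_nonneg _
  have h2'' : (2 : ℝ≥0∞).toReal = ((2:ℕ):ℝ) := by norm_num
  rw [h2'', Real.rpow_natCast] at key
  nlinarith [hnn]

lemma aeval_apply_eig (S : H2 →L[ℂ] H2) (x : H2) (l : ℂ) (hx : S x = l • x)
    (p : Polynomial ℂ) : (Polynomial.aeval S p) x = p.eval l • x := by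
  have hpow : ∀ n : ℕ, (S ^ n) x = l ^ n • x := by
    intro n
    induction n with
    | zero => simp
    | succ k ih =>
      rw [pow_succ, pow_succ, ContinuousLinearMap.mul_apply, hx, map_smul, ih,
        smul_smul, mul_comm]
  induction p using Polynomial.induction_on' with
  | add p q hp hq => simp [hp, hq, add_smul]
  | monomial n a =>
    rw [Polynomial.aeval_monomial, ContinuousLinearMap.mul_apply, hpow,
      Polynomial.eval_monomial]
    rw [map_smul, Algebra.algebraMap_eq_smul_one, ContinuousLinearMap.smul_apply,
      ContinuousLinearMap.one_apply, smul_smul, mul_comm]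



set_option maxHeartbeats 800000 in
set_option synthInstance.maxHeartbeats 400000 in
lemma no_singular_sequence (T : H2 →L[ℂ] H2)
    (hker : FiniteDimensional ℂ (LinearMap.ker (T : H2 →ₗ[ℂ] H2)))
    (hrange : IsClosed (LinearMap.range (T : H2 →ₗ[ℂ] H2) : Set H2))
    (x : ℕ → H2) (hxnorm : ∀ k, ‖x k‖ = 1)
    (hTx_norm : Filter.Tendsto (fun k => ‖T (x k)‖) Filter.atTop (nhds 0))
    (hcoord : ∀ n : ℕ, Filter.Tendsto (fun k => (x k : ∀ _ : ℕ, ℂ) n) Filter.atTop (nhds 0)) :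
    False := by
  set K : Submodule ℂ H2 := LinearMap.ker (T : H2 →ₗ[ℂ] H2) with hKdef
  haveI : FiniteDimensional ℂ K := hker
  obtain ⟨π, hπ⟩ := Submodule.ClosedComplemented.of_finiteDimensional K
  set f : H2 →L[ℂ] H2 := K.subtypeL.comp π with hfdef
  have hf_mem : ∀ u : H2, f u ∈ K := fun u => (π u).2
  have hf_fix : ∀ u : H2, u ∈ K → f u = u := by
    intro u hu
    exact congrArg Subtype.val (hπ ⟨u, hu⟩)
  have hTK : ∀ u : H2, u ∈ K → T u = 0 := by
    intro u hu
    exact LinearMap.mem_ker.mp hu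
  set R : Submodule ℂ H2 := LinearMap.range (T : H2 →ₗ[ℂ] H2) with hRdef
  haveI : CompleteSpace R := hrange.completeSpace_coe
  set K' : Submodule ℂ H2 := LinearMap.ker (f : H2 →ₗ[ℂ] H2) with hK'def
  have hK'closed : IsClosed (K' : Set H2) := ContinuousLinearMap.isClosed_ker f
  haveI : CompleteSpace K' := hK'closed.completeSpace_coe
  have hK'f : ∀ u : H2, u ∈ K' → f u = 0 := fun u hu => hu
  have hmemK' : ∀ u : H2, u - f u ∈ K' := by
    intro u
    show f (u - f u) = 0
    rw [map_sub, hf_fix (f u) (hf_mem u), sub_self]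
  have hmemR : ∀ u : H2, T u ∈ R := fun u => LinearMap.mem_range_self _ _
  set T₁ : K' →L[ℂ] R :=
    ContinuousLinearMap.codRestrict (T.comp K'.subtypeL) R (fun w => hmemR w) with hT1def
  have hT1_apply : ∀ w : K', ((T₁ w : H2)) = T (w : H2) := fun w => rfl
  have hinj : T₁.ker = ⊥ := by
    rw [Submodule.eq_bot_iff]
    rintro w hw
    have hTw : T (w : H2) = 0 := by
      have h := congrArg (Subtype.val) (LinearMap.mem_ker.mp hw)
      simpa [hT1_apply] using h
    have hwK : (w : H2) ∈ K := LinearMap.mem_ker.mpr hTw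
    have h0 : f (w : H2) = 0 := hK'f _ w.2
    rw [hf_fix _ hwK] at h0
    exact Subtype.ext h0
  have hsurj : T₁.range = ⊤ := by
    rw [Submodule.eq_top_iff']
    rintro y
    obtain ⟨u, hu⟩ := y.2
    refine ⟨⟨u - f u, hmemK' u⟩, ?_⟩
    apply Subtype.ext
    rw [ContinuousLinearMap.coe_coe, hT1_apply]
    calc T (u - f u) = T u - T (f u) := map_sub _ _ _
    _ = T u := by rw [hTK _ (hf_mem u), sub_zero]
    _ = (y : H2) := hu
  clear_value T₁ K' R f K
  set e := ContinuousLinearEquiv.ofBijective T₁ hinj hsurj with hedef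
  obtain ⟨C', hC'⟩ : ∃ C' : ℝ≥0, AntilipschitzWith C' e := ⟨_, e.antilipschitz⟩
  set C : ℝ := (C' : ℝ) with hCdef
  have hCnn : 0 ≤ C := C'.coe_nonneg
  have hC : ∀ w : K', ‖(w : H2)‖ ≤ C * ‖T (w : H2)‖ := by
    intro w
    have h := hC'.le_mul_dist w 0
    rw [dist_zero_right, dist_eq_norm, map_zero, sub_zero] at h
    have he : e w = T₁ w := by rw [hedef]; rfl
    rw [he] at h
    have h2 : ‖T₁ w‖ = ‖T (w : H2)‖ := by rw [Submodule.coe_norm, hT1_apply]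
    rw [h2] at h
    exact h
  -- decompose the unit vectors
  set w : ℕ → H2 := fun k => x k - f (x k) with hwdef
  have hTw : ∀ k, T (w k) = T (x k) := by
    intro k
    rw [hwdef]
    calc T (x k - f (x k)) = T (x k) - T (f (x k)) := map_sub _ _ _
    _ = T (x k) := by rw [hTK _ (hf_mem (x k)), sub_zero]
  have hwb : ∀ k, ‖w k‖ ≤ C * ‖T (x k)‖ := by
    intro k
    have := hC ⟨w k, hmemK' (x k)⟩
    simpa [hTw k] using this
  have hw0 : Tendsto (fun k => w k) atTop (nhds 0) := by
    apply squeeze_zero_norm hwb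
    have := hTx_norm.const_mul C
    simpa using this
  -- subsequence of the kernel parts
  have hvb : ∀ k, (⟨f (x k), hf_mem (x k)⟩ : K) ∈ Metric.closedBall (0 : K) (1 + C * ‖T‖) := by
    intro k
    rw [Metric.mem_closedBall, dist_zero_right, Submodule.coe_norm]
    have h1 : ‖f (x k)‖ ≤ ‖x k‖ + ‖w k‖ := by
      have hfx : f (x k) = x k - w k := by rw [hwdef]; simp
      rw [hfx]
      exact norm_sub_le _ _
    have h2 : ‖T (x k)‖ ≤ ‖T‖ := by
      calc ‖T (x k)‖ ≤ ‖T‖ * ‖x k‖ := T.le_opNorm _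
      _ = ‖T‖ := by rw [hxnorm k, mul_one]
    have h3 : ‖w k‖ ≤ C * ‖T‖ := (hwb k).trans (by nlinarith)
    rw [hxnorm k] at h1
    linarith
  haveI : ProperSpace K := FiniteDimensional.proper ℂ K
  obtain ⟨a, -, σ, hσ, hva⟩ :=
    tendsto_subseq_of_bounded Metric.isBounded_closedBall hvb
  have hv_tendsto : Tendsto (fun k => f (x (σ k))) atTop (nhds (a : H2)) :=
    ((continuous_subtype_val.tendsto a).comp hva)
  have hw_tendsto : Tendsto (fun k => w (σ k)) atTop (nhds 0) :=
    hw0.comp hσ.tendsto_atTop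
  have hx_tendsto : Tendsto (fun k => x (σ k)) atTop (nhds (a : H2)) := by
    have h := hv_tendsto.add hw_tendsto
    rw [add_zero] at h
    refine h.congr fun k => ?_
    rw [hwdef]
    simp
  have hnorm_a : ‖(a : H2)‖ = 1 := by
    have h1 := hx_tendsto.norm
    have h2 : Tendsto (fun k => ‖x (σ k)‖) atTop (nhds 1) := by
      simpa [hxnorm] using (tendsto_const_nhds : Tendsto (fun _ : ℕ => (1:ℝ)) atTop (nhds 1))
    exact tendsto_nhds_unique h1 h2
  -- evaluation maps are continuous
  have heval : ∀ n : ℕ, Continuous (fun g : H2 => (g : ∀ _ : ℕ, ℂ) n) := by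
    intro n
    refine (LipschitzWith.mk_one ?_).continuous
    intro g₁ g₂
    rw [dist_eq_norm, dist_eq_norm]
    have h := lp.norm_apply_le_norm (by norm_num : (2 : ℝ≥0∞) ≠ 0) (g₁ - g₂) n
    rwa [lp.coeFn_sub, Pi.sub_apply] at h
  have ha_coord : ∀ n, (a : H2) n = 0 := by
    intro n
    exact tendsto_nhds_unique (((heval n).tendsto _).comp hx_tendsto)
      ((hcoord n).comp hσ.tendsto_atTop)
  have ha0 : (a : H2) = 0 := by
    apply lp.ext
    funext n
    simpa using ha_coord n
  rw [ha0] at hnorm_a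
  simp at hnorm_a

set_option maxHeartbeats 1000000 in
set_option synthInstance.maxHeartbeats 400000 in
/-- Let φ be in the disc algebra and φ(λ) = μ with λ, μ on the unit circle. Then μ
belongs to the essential spectrum of φ(S*), where φ(S*) is the operator-norm limit
of Pₙ(S*) for polynomials Pₙ converging to φ uniformly on the closed disc. -/
theorem circle_value_in_essential_spectrum (φ : ℂ → ℂ)
    (hφc : ContinuousOn φ (Metric.closedBall (0 : ℂ) 1))
    (hφa : DifferentiableOn ℂ φ (Metric.ball (0 : ℂ) 1))
    (S : H2 →L[ℂ] H2) (hS : ∀ (x : H2) (n : ℕ), S x n = x (n + 1))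
    (P : ℕ → Polynomial ℂ)
    (hP : TendstoUniformlyOn (fun n z => (P n).eval z) φ Filter.atTop
      (Metric.closedBall (0 : ℂ) 1))
    (A : H2 →L[ℂ] H2)
    (hA : Filter.Tendsto (fun n => Polynomial.aeval S (P n)) Filter.atTop (nhds A))
    (l μ : ℂ) (hl : ‖l‖ = 1) (hμ : ‖μ‖ = 1) (hlμ : φ l = μ) :
    ¬ IsFredholm (A - μ • 1) := by
  rintro ⟨hker, hrange, -⟩
  set T : H2 →L[ℂ] H2 := A - μ • 1 with hTdef
  -- the inward sequence of points
  set r : ℕ → ℝ := fun k => 1 - 1 / (k + 1) with hrdef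
  have hr0 : ∀ k, 0 ≤ r k := by
    intro k
    have : 1 / ((k:ℝ) + 1) ≤ 1 := by
      rw [div_le_one (by positivity)]; linarith [Nat.cast_nonneg (α := ℝ) k]
    simp only [hrdef]; linarith
  have hr1 : ∀ k, r k < 1 := by
    intro k
    have : 0 < 1 / ((k:ℝ) + 1) := by positivity
    simp only [hrdef]; linarith
  set lam : ℕ → ℂ := fun k => (r k : ℂ) * l with hlamdef
  have hlam_norm : ∀ k, ‖lam k‖ = r k := by
    intro k
    simp [hlamdef, hl, abs_of_nonneg (hr0 k), Complex.norm_real]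
  have hlam_lt : ∀ k, ‖lam k‖ < 1 := fun k => by rw [hlam_norm]; exact hr1 k
  have hlam_mem : ∀ k, lam k ∈ Metric.closedBall (0:ℂ) 1 := by
    intro k
    simpa [Metric.mem_closedBall, dist_eq_norm] using (hlam_lt k).le
  have hl_mem : l ∈ Metric.closedBall (0:ℂ) 1 := by
    simp [Metric.mem_closedBall, dist_eq_norm, hl]
  have hr_tendsto : Tendsto r atTop (nhds 1) := by
    have := tendsto_one_div_add_atTop_nhds_zero_nat (𝕜 := ℝ)
    have h := (tendsto_const_nhds (x := (1:ℝ)) (f := atTop)).sub this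
    simpa [hrdef] using h
  have hlam_tendsto : Tendsto lam atTop (nhds l) := by
    have : Tendsto (fun k => ((r k : ℂ))) atTop (nhds (1:ℂ)) :=
      ((Complex.continuous_ofReal.tendsto 1).comp hr_tendsto)
    simpa [hlamdef] using this.mul_const l
  -- unit eigenvectors
  set x : ℕ → H2 := fun k => xvec (lam k) (hlam_lt k) with hxdef
  have hxnorm : ∀ k, ‖x k‖ = 1 := fun k => norm_xvec _ _
  have hSx : ∀ k, S (x k) = lam k • x k := by
    intro k
    apply lp.ext
    funext n
    rw [hS, lp.coeFn_smul, Pi.smul_apply, hxdef]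
    simp only [xvec_apply]
    rw [smul_eq_mul]
    ring
  have hAx : ∀ k, A (x k) = φ (lam k) • x k := by
    intro k
    have h1 : Tendsto (fun n => (Polynomial.aeval S (P n)) (x k)) atTop (nhds (A (x k))) := by
      exact ((ContinuousLinearMap.apply ℂ H2 (x k)).continuous.tendsto A).comp hA
    have h2 : (fun n => (Polynomial.aeval S (P n)) (x k))
        = fun n => (P n).eval (lam k) • x k := by
      funext n; exact aeval_apply_eig S (x k) (lam k) (hSx k) (P n)
    have h3 : Tendsto (fun n => (P n).eval (lam k)) atTop (nhds (φ (lam k))) :=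
      hP.tendsto_at (hlam_mem k)
    have h4 : Tendsto (fun n => (P n).eval (lam k) • x k) atTop (nhds (φ (lam k) • x k)) :=
      h3.smul tendsto_const_nhds
    rw [h2] at h1
    exact tendsto_nhds_unique h1 h4
  have hTx : ∀ k, T (x k) = (φ (lam k) - μ) • x k := by
    intro k
    rw [hTdef]
    simp only [ContinuousLinearMap.sub_apply, ContinuousLinearMap.smul_apply,
      ContinuousLinearMap.one_apply, hAx k, sub_smul]
  have hTx_norm : Tendsto (fun k => ‖T (x k)‖) atTop (nhds 0) := by
    have hφ : Tendsto (fun k => φ (lam k)) atTop (nhds μ) := by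
      rw [← hlμ]
      exact ((hφc l hl_mem).tendsto).comp
        (tendsto_nhdsWithin_of_tendsto_nhds_of_eventually_within lam hlam_tendsto
          (Filter.Eventually.of_forall hlam_mem))
    have : Tendsto (fun k => ‖φ (lam k) - μ‖) atTop (nhds 0) := by
      have := (hφ.sub_const μ).norm
      simpa using this
    refine this.congr ?_
    intro k
    rw [hTx k, norm_smul, hxnorm k, mul_one]
  have hsq : Tendsto (fun k => Real.sqrt (1 - ‖lam k‖ ^ 2)) atTop (nhds 0) := by
    have h1 : Tendsto (fun k => 1 - ‖lam k‖ ^ 2) atTop (nhds 0) := by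
      have h2 := hlam_tendsto.norm
      rw [hl] at h2
      have h3 := ((tendsto_const_nhds (x := (1:ℝ)) (f := atTop)).sub ((h2.mul h2)))
      simpa [pow_two] using h3
    have := (Real.continuous_sqrt.tendsto 0).comp h1
    simpa using (show Tendsto (fun k => Real.sqrt (1 - ‖lam k‖ ^ 2)) atTop (nhds (Real.sqrt 0)) from this)
  have hcoord : ∀ n : ℕ, Tendsto (fun k => (x k : ∀ _ : ℕ, ℂ) n) atTop (nhds 0) := by
    intro n
    apply squeeze_zero_norm _ hsq
    intro k
    rw [hxdef]
    show ‖(xvec (lam k) (hlam_lt k)) n‖ ≤ _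
    rw [xvec_apply, norm_mul, Complex.norm_real, Real.norm_eq_abs,
      abs_of_nonneg (Real.sqrt_nonneg _), norm_pow]
    have hle : ‖lam k‖ ^ n ≤ 1 := pow_le_one₀ (norm_nonneg _) (hlam_lt k).le
    nlinarith [Real.sqrt_nonneg (1 - ‖lam k‖ ^ 2)]
  exact no_singular_sequence T hker hrange x hxnorm hTx_norm hcoord
end

section
/- If T is a hypercyclic bounded linear operator on a separable complex Hilbert space and x is a hypercyclic vector for T, then Tx is also a hypercyclic vector for T; consequently the set of hypercyclic vectors for T is dense. -/
lemma hc_step {H : Type*} [NormedAddCommGroup H]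
    [InnerProductSpace ℂ H] (T : H →L[ℂ] H) (y : H)
    (hy : Dense (Set.range fun n : ℕ => (T ^ n) y)) :
    Dense (Set.range fun n : ℕ => (T ^ n) (T y)) := by
  rcases subsingleton_or_nontrivial H with hH | hH
  · intro z
    have : z = (T ^ 0) (T y) := Subsingleton.elim _ _
    exact subset_closure ⟨0, this.symm⟩
  · haveI := Module.punctured_nhds_neBot ℂ H y
    have h1 : Dense ((Set.range fun n : ℕ => (T ^ n) y) \ {y}) :=
      hy.diff_singleton y
    refine h1.mono ?_
    rintro z ⟨⟨n, rfl⟩, hz⟩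
    cases n with
    | zero => exact absurd rfl hz
    | succ m =>
      refine ⟨m, ?_⟩
      simp [pow_succ, ContinuousLinearMap.mul_apply]

/-- If x is a hypercyclic vector for a bounded operator T on a separable complex
Hilbert space, then Tx is also hypercyclic; consequently the set of hypercyclic
vectors for T is dense. -/
theorem hypercyclic_vectors_dense {H : Type*} [NormedAddCommGroup H]
    [InnerProductSpace ℂ H] [CompleteSpace H] [TopologicalSpace.SeparableSpace H]
    (T : H →L[ℂ] H) (x : H)
    (hx : Dense (Set.range fun n : ℕ => (T ^ n) x)) :
    Dense (Set.range fun n : ℕ => (T ^ n) (T x)) ∧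
    Dense {y : H | Dense (Set.range fun n : ℕ => (T ^ n) y)} := by
  have key : ∀ n : ℕ, Dense (Set.range fun m : ℕ => (T ^ m) ((T ^ n) x)) := by
    intro n
    induction n with
    | zero => simpa using hx
    | succ k ih =>
      have := hc_step T ((T ^ k) x) ih
      refine this.mono ?_
      rintro z ⟨m, rfl⟩
      refine ⟨m, ?_⟩
      simp only [← ContinuousLinearMap.mul_apply, ← pow_succ, ← pow_succ']
  refine ⟨by simpa using hc_step T x hx, ?_⟩
  refine hx.mono ?_
  rintro z ⟨n, rfl⟩
  exact key n
end

section
/- (Godefroy–Shapiro criterion) Let T be a bounded linear operator on a separable complex Banach space X. If both the span of eigenvectors of T corresponding to eigenvalues of modulus less than 1 and the span of eigenvectors corresponding to eigenvalues of modulus greater than 1 are dense in X, then T is hypercyclic (indeed hereditarily hypercyclic with respect to the full sequence of natural numbers). -/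
open Filter Topology TopologicalSpace Set

section Aux

variable {X : Type*} [NormedAddCommGroup X] [NormedSpace ℂ X] (T : X →L[ℂ] X)

lemma pow_apply_eigen {x : X} {c : ℂ} (h : T x = c • x) (n : ℕ) :
    (T ^ n) x = c ^ n • x := by
  induction n with
  | zero => simp
  | succ n ih =>
    rw [pow_succ, ContinuousLinearMap.mul_apply, h, map_smul, ih, smul_smul, pow_succ,
      mul_comm]

lemma tendsto_zero_of_mem_span1 {u : X}
    (hu : u ∈ Submodule.span ℂ {x : X | x ≠ 0 ∧ ∃ c : ℂ, ‖c‖ < 1 ∧ T x = c • x}) :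
    Tendsto (fun n : ℕ => (T ^ n) u) atTop (𝓝 0) := by
  induction hu using Submodule.span_induction with
  | mem x hx =>
    obtain ⟨-, c, hc, hTx⟩ := hx
    have h1 : Tendsto (fun n : ℕ => c ^ n) atTop (𝓝 0) :=
      tendsto_pow_atTop_nhds_zero_of_norm_lt_one hc
    have := h1.smul_const x
    simpa [pow_apply_eigen T hTx] using this
  | zero => simp only [map_zero]; exact tendsto_const_nhds
  | add x y hx hy ihx ihy => simpa using ihx.add ihy
  | smul a x hx ih => simpa using ih.const_smul a

lemma exists_preimage_of_mem_span2 {v : X}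
    (hv : v ∈ Submodule.span ℂ {x : X | x ≠ 0 ∧ ∃ c : ℂ, 1 < ‖c‖ ∧ T x = c • x}) :
    ∃ w : ℕ → X, (∀ n, (T ^ n) (w n) = v) ∧ Tendsto w atTop (𝓝 0) := by
  induction hv using Submodule.span_induction with
  | mem x hx =>
    obtain ⟨-, c, hc, hTx⟩ := hx
    have hc0 : c ≠ 0 := by
      intro h; rw [h] at hc; simp at hc; linarith
    refine ⟨fun n => (c⁻¹) ^ n • x, fun n => ?_, ?_⟩
    · rw [map_smul, pow_apply_eigen T hTx, smul_smul, ← mul_pow, inv_mul_cancel₀ hc0,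
        one_pow, one_smul]
    · have h1 : Tendsto (fun n : ℕ => (c⁻¹) ^ n) atTop (𝓝 0) := by
        apply tendsto_pow_atTop_nhds_zero_of_norm_lt_one
        rw [norm_inv]
        exact inv_lt_one_of_one_lt₀ hc
      simpa using h1.smul_const x
  | zero => exact ⟨fun _ => 0, by simp, tendsto_const_nhds⟩
  | add x y hx hy ihx ihy =>
    obtain ⟨w1, hw1, hw1t⟩ := ihx
    obtain ⟨w2, hw2, hw2t⟩ := ihy
    exact ⟨fun n => w1 n + w2 n, fun n => by rw [map_add, hw1 n, hw2 n],
      by simpa using hw1t.add hw2t⟩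
  | smul a x hx ih =>
    obtain ⟨w, hw, hwt⟩ := ih
    exact ⟨fun n => a • w n, fun n => by simp [hw n],
      by simpa using hwt.const_smul a⟩

end Aux

/-- Godefroy–Shapiro criterion: if the spans of eigenvectors of T with eigenvalues
of modulus < 1 and of modulus > 1 are both dense in a separable complex Banach
space, then T is hypercyclic, indeed hereditarily hypercyclic with respect to the
full sequence of natural numbers. -/
theorem godefroy_shapiro_criterion {X : Type*} [NormedAddCommGroup X]
    [NormedSpace ℂ X] [CompleteSpace X] [TopologicalSpace.SeparableSpace X]
    (T : X →L[ℂ] X)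
    (h1 : Dense (Submodule.span ℂ
      {x : X | x ≠ 0 ∧ ∃ c : ℂ, ‖c‖ < 1 ∧ T x = c • x} : Set X))
    (h2 : Dense (Submodule.span ℂ
      {x : X | x ≠ 0 ∧ ∃ c : ℂ, 1 < ‖c‖ ∧ T x = c • x} : Set X)) :
    (∃ x : X, Dense (Set.range fun n : ℕ => (T ^ n) x)) ∧
    (∀ k : ℕ → ℕ, StrictMono k →
      ∃ x : X, Dense (Set.range fun i : ℕ => (T ^ k i) x)) := by
  -- key transitivity lemma
  have key : ∀ U V : Set X, IsOpen U → IsOpen V → U.Nonempty → V.Nonempty →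
      ∀ᶠ n : ℕ in atTop, ∃ x ∈ U, (T ^ n) x ∈ V := by
    intro U V hU hV hUne hVne
    obtain ⟨u, hu, huU⟩ := h1.exists_mem_open hU hUne
    obtain ⟨v, hv, hvV⟩ := h2.exists_mem_open hV hVne
    obtain ⟨w, hw, hwt⟩ := exists_preimage_of_mem_span2 T hv
    have htu := tendsto_zero_of_mem_span1 T hu
    have hx : Tendsto (fun n : ℕ => u + w n) atTop (𝓝 u) := by
      simpa using tendsto_const_nhds.add hwt
    have hTx : Tendsto (fun n : ℕ => (T ^ n) (u + w n)) atTop (𝓝 v) := by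
      have : (fun n : ℕ => (T ^ n) (u + w n)) = fun n => (T ^ n) u + v := by
        funext n; rw [map_add, hw n]
      rw [this]
      simpa using htu.add_const v
    filter_upwards [hx.eventually (hU.mem_nhds huU), hTx.eventually (hV.mem_nhds hvV)]
      with n h1' h2'
    exact ⟨u + w n, h1', h2'⟩
  have main : ∀ k : ℕ → ℕ, StrictMono k →
      ∃ x : X, Dense (Set.range fun i : ℕ => (T ^ k i) x) := by
    intro k hk
    classical
    have hkt : Tendsto k atTop atTop := hk.tendsto_atTop
    -- countable basis
    set B := countableBasis X with hB
    have hBbasis := isBasis_countableBasis X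
    have hBcnt : B.Countable := countable_countableBasis X
    haveI : Countable {V : Set X // V ∈ B} := hBcnt.to_subtype
    set f : {V : Set X // V ∈ B} → Set X := fun V =>
      if V.1.Nonempty then ⋃ i : ℕ, (fun x => (T ^ k i) x) ⁻¹' V.1 else univ with hf
    have hfo : ∀ V, IsOpen (f V) := by
      intro V
      rw [hf]; dsimp only
      split
      · exact isOpen_iUnion fun i =>
          ((hBbasis.isOpen V.2).preimage (T ^ k i).continuous)
      · exact isOpen_univ
    have hfd : ∀ V, Dense (f V) := by
      intro V
      rw [hf]; dsimp only
      split
      · next hVne =>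
        rw [dense_iff_inter_open]
        intro U hU hUne
        obtain ⟨i, x, hxU, hxV⟩ :=
          (hkt.eventually (key U V.1 hU (hBbasis.isOpen V.2) hUne hVne)).exists
        exact ⟨x, hxU, mem_iUnion.2 ⟨i, hxV⟩⟩
      · exact dense_univ
    have hG : Dense (⋂ V, f V) := dense_iInter_of_isOpen hfo hfd
    obtain ⟨x, hx⟩ := hG.nonempty
    refine ⟨x, hBbasis.dense_iff.2 fun o ho hone => ?_⟩
    have hxo := mem_iInter.1 hx ⟨o, ho⟩
    rw [hf] at hxo
    simp only [hone, if_pos] at hxo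
    obtain ⟨i, hi⟩ := mem_iUnion.1 hxo
    exact ⟨(T ^ k i) x, hi, ⟨i, rfl⟩⟩
  exact ⟨(main id strictMono_id).imp fun x hx => hx, main⟩
end

section
/- For λ ∈ ℂ with |λ| > 1, the operator λS* on ℓ²(ℕ) is hypercyclic (Rolewicz's theorem). -/
namespace Rolewicz

noncomputable def blk (t m : ℕ) (a : ℕ → ℂ) : H2 :=
  ∑ i ∈ Finset.range m, lp.single 2 (t + i) (a i)

lemma blk_apply (t m : ℕ) (a : ℕ → ℂ) (q : ℕ) :
    (blk t m a : ∀ _ : ℕ, ℂ) q =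
      ∑ i ∈ Finset.range m, (if q = t + i then a i else 0) := by
  simp only [blk, lp.coeFn_sum, Finset.sum_apply]
  refine Finset.sum_congr rfl fun i _ => ?_
  rw [lp.single_apply]
  split <;> simp_all

lemma blk_apply_of_ge (t m : ℕ) (a : ℕ → ℂ) (q : ℕ) (hq : t + m ≤ q) :
    (blk t m a : ∀ _ : ℕ, ℂ) q = 0 := by
  rw [blk_apply]
  refine Finset.sum_eq_zero fun i hi => ?_
  simp only [Finset.mem_range] at hi
  rw [if_neg]; omega

lemma blk_shift (t m N : ℕ) (hN : N ≤ t) (a : ℕ → ℂ) (q : ℕ) :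
    (blk t m a : ∀ _ : ℕ, ℂ) (q + N) = (blk (t - N) m a : ∀ _ : ℕ, ℂ) q := by
  rw [blk_apply, blk_apply]
  refine Finset.sum_congr rfl fun i _ => ?_
  congr 1
  simp only [eq_iff_iff]
  omega

lemma norm_blk_le (t m : ℕ) (a : ℕ → ℂ) :
    ‖blk t m a‖ ≤ ∑ i ∈ Finset.range m, ‖a i‖ := by
  refine (norm_sum_le _ _).trans (le_of_eq (Finset.sum_congr rfl fun i _ => ?_))
  have := lp.norm_single (p := 2) (E := fun _ : ℕ => ℂ) (by norm_num) (t + i) (a i)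
  simpa using this

lemma pow_apply (l : ℂ) (S : H2 →L[ℂ] H2) (hS : ∀ (x : H2) (n : ℕ), S x n = x (n + 1))
    (N : ℕ) (x : H2) (q : ℕ) : (((l • S) ^ N) x : ∀ _ : ℕ, ℂ) q = l ^ N * x (q + N) := by
  induction N generalizing x with
  | zero => simp
  | succ N ih =>
    rw [pow_succ, ContinuousLinearMap.mul_apply, ih]
    have : ((l • S) x : ∀ _ : ℕ, ℂ) (q + N) = l * x (q + N + 1) := by
      rw [ContinuousLinearMap.smul_apply, lp.coeFn_smul, Pi.smul_apply, hS]
      simp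
    rw [this, pow_succ]
    have hq : q + N + 1 = q + (N + 1) := by omega
    rw [hq]; ring

lemma pow_blk (l : ℂ) (S : H2 →L[ℂ] H2) (hS : ∀ (x : H2) (n : ℕ), S x n = x (n + 1))
    (N t m : ℕ) (hN : N ≤ t) (a : ℕ → ℂ) :
    ((l • S) ^ N) (blk t m a) = (l ^ N) • blk (t - N) m a := by
  refine lp.ext (funext fun q => ?_)
  rw [pow_apply l S hS, blk_shift t m N hN a q, lp.coeFn_smul, Pi.smul_apply, smul_eq_mul]

lemma pow_blk_zero (l : ℂ) (S : H2 →L[ℂ] H2) (hS : ∀ (x : H2) (n : ℕ), S x n = x (n + 1))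
    (N t m : ℕ) (hN : t + m ≤ N) (a : ℕ → ℂ) :
    ((l • S) ^ N) (blk t m a) = 0 := by
  refine lp.ext (funext fun q => ?_)
  rw [pow_apply l S hS, blk_apply_of_ge t m a _ (by omega), mul_zero]
  simp

instance : TopologicalSpace.SeparableSpace H2 := by
  have h1 : Dense (Submodule.span ℂ
      (Set.range fun ki : ℕ × ℕ => lp.single (E := fun _ : ℕ => ℂ) 2 ki.1 (1 : ℂ)) : Set H2) := by
    rw [dense_iff_closure_eq, ← Set.univ_subset_iff]
    intro f _
    have hsum := lp.hasSum_single (E := fun _ : ℕ => ℂ) (p := 2) (by norm_num) f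
    refine mem_closure_of_tendsto hsum.tendsto_sum_nat (Filter.Eventually.of_forall fun m => ?_)
    refine Submodule.sum_mem _ fun i _ => ?_
    have : lp.single (E := fun _ : ℕ => ℂ) 2 i (f i) = (f i) • lp.single 2 i (1 : ℂ) := by
      rw [← lp.single_smul]; norm_num
    rw [this]
    exact Submodule.smul_mem _ _ (Submodule.subset_span ⟨(i, 0), rfl⟩)
  have h2 : TopologicalSpace.IsSeparable (Submodule.span ℂ
      (Set.range fun ki : ℕ × ℕ => lp.single (E := fun _ : ℕ => ℂ) 2 ki.1 (1 : ℂ)) : Set H2) :=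
    (Set.countable_range _).isSeparable.span
  have h3 : TopologicalSpace.IsSeparable (Set.univ : Set H2) := by
    rw [← h1.closure_eq]
    exact h2.closure
  exact (TopologicalSpace.isSeparable_univ_iff).mp h3

end Rolewicz

set_option maxHeartbeats 1000000 in
/-- Rolewicz's theorem: for |λ| > 1 the operator λS* on ℓ²(ℕ) is hypercyclic. -/
theorem rolewicz_hypercyclic (l : ℂ) (hl : 1 < ‖l‖)
    (S : H2 →L[ℂ] H2) (hS : ∀ (x : H2) (n : ℕ), S x n = x (n + 1)) :
    ∃ x : H2, Dense (Set.range fun n : ℕ => ((l • S) ^ n) x) := by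
  classical
  obtain ⟨d, hd⟩ := TopologicalSpace.exists_dense_seq H2
  have hl0 : (0:ℝ) < ‖l‖ := lt_trans one_pos hl
  have hl1 : (1:ℝ) ≤ ‖l‖ := le_of_lt hl
  have hlne : l ≠ 0 := by
    intro h; rw [h, norm_zero] at hl; linarith
  -- block data indexed by pairing
  set m : ℕ → ℕ := fun j => (Nat.unpair j).2 with hm_def
  set c : ℕ → ℕ → ℂ := fun j i => (d (Nat.unpair j).1 : ∀ _ : ℕ, ℂ) i with hc_def
  set B : ℕ → ℝ := fun j => ∑ i ∈ Finset.range (m j), ‖c j i‖ with hB_def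
  have hB0 : ∀ j, 0 ≤ B j := fun j => Finset.sum_nonneg fun i _ => norm_nonneg _
  -- choose the gaps for the forward-shift positions
  have hex : ∀ j : ℕ, ∃ N : ℕ, (2:ℝ) ^ j * (B j + 1) < ‖l‖ ^ N :=
    fun j => pow_unbounded_of_one_lt _ hl
  choose Nsel hNsel using hex
  set n : ℕ → ℕ := fun j => Nat.rec 0 (fun i ni => ni + m i + Nsel (i + 1)) j with hn_def
  have hn0 : n 0 = 0 := rfl
  have hnsucc : ∀ j, n (j + 1) = n j + m j + Nsel (j + 1) := fun j => rfl
  have hmono : ∀ i j, i < j → n i + m i ≤ n j := by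
    intro i j hij
    induction j with
    | zero => omega
    | succ j ih =>
      rcases Nat.lt_succ_iff_lt_or_eq.mp hij with h | h
      · have := ih h; rw [hnsucc]; omega
      · subst h; rw [hnsucc]; omega
  have hle : ∀ i j, i ≤ j → n i ≤ n j := by
    intro i j hij
    rcases eq_or_lt_of_le hij with h | h
    · subst h; rfl
    · have := hmono i j h; omega
  have hpow : ∀ i j, i < j → ‖l‖ ^ n i * ((2:ℝ) ^ j * (B j + 1)) < ‖l‖ ^ n j := by
    intro i j hij
    obtain ⟨j', rfl⟩ : ∃ j', j = j' + 1 := ⟨j - 1, by omega⟩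
    have h1 : n i + Nsel (j' + 1) ≤ n (j' + 1) := by
      have := hle i j' (by omega); rw [hnsucc]; omega
    calc ‖l‖ ^ n i * ((2:ℝ) ^ (j' + 1) * (B (j' + 1) + 1))
        < ‖l‖ ^ n i * ‖l‖ ^ Nsel (j' + 1) :=
          mul_lt_mul_of_pos_left (hNsel _) (pow_pos hl0 _)
      _ = ‖l‖ ^ (n i + Nsel (j' + 1)) := (pow_add _ _ _).symm
      _ ≤ ‖l‖ ^ n (j' + 1) := pow_le_pow_right₀ hl1 h1
  -- the blocks and the candidate vector
  set G : ℕ → H2 := fun j => Rolewicz.blk (n j) (m j) (c j) with hG_def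
  set y : ℕ → H2 := fun j => Rolewicz.blk 0 (m j) (c j) with hy_def
  set term : ℕ → H2 := fun j => (l ^ n j)⁻¹ • G j with hterm_def
  have hnormG : ∀ j, ‖G j‖ ≤ B j := fun j => Rolewicz.norm_blk_le _ _ _
  have hnormterm : ∀ j, ‖term j‖ ≤ (‖l‖ ^ n j)⁻¹ * B j := by
    intro j
    rw [hterm_def, norm_smul, norm_inv, norm_pow]
    exact mul_le_mul_of_nonneg_left (hnormG j) (by positivity)
  have htermle : ∀ j, 1 ≤ j → ‖term j‖ ≤ (1/2 : ℝ) ^ j := by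
    intro j hj
    refine (hnormterm j).trans ?_
    have h2 := hpow 0 j hj
    rw [hn0, pow_zero, one_mul] at h2
    have h12 : (1/2 : ℝ) ^ j * 2 ^ j = 1 := by
      rw [one_div, inv_pow, inv_mul_cancel₀ (by positivity)]
    rw [inv_mul_le_iff₀ (pow_pos hl0 _)]
    calc B j ≤ (1/2 : ℝ) ^ j * 2 ^ j * (B j + 1) := by
          rw [h12, one_mul]; linarith
      _ = (1/2 : ℝ) ^ j * (2 ^ j * (B j + 1)) := by ring
      _ ≤ (1/2 : ℝ) ^ j * ‖l‖ ^ n j := by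
          exact mul_le_mul_of_nonneg_left h2.le (by positivity)
      _ = ‖l‖ ^ n j * (1/2 : ℝ) ^ j := by ring
  have hgeom : Summable fun j : ℕ => (1/2 : ℝ) ^ j :=
    summable_geometric_of_lt_one (by norm_num) (by norm_num)
  have hsum : Summable term := by
    refine Summable.of_norm_bounded_eventually hgeom ?_
    rw [Nat.cofinite_eq_atTop]
    exact Filter.eventually_atTop.2 ⟨1, htermle⟩
  refine ⟨∑' j, term j, ?_⟩
  have hdr : DenseRange fun N : ℕ => ((l • S) ^ N) (∑' j, term j) := by
    rw [Metric.denseRange_iff]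
    intro z r hr
    obtain ⟨k, hk⟩ := Metric.denseRange_iff.mp hd z (r/3) (by linarith)
    -- choose the truncation level
    have htends : Filter.Tendsto
        (fun M => ∑ i ∈ Finset.range M, lp.single (E := fun _ : ℕ => ℂ) 2 i ((d k : ∀ _ : ℕ, ℂ) i))
        Filter.atTop (nhds (d k)) :=
      (lp.hasSum_single (E := fun _ : ℕ => ℂ) (p := 2) (by norm_num) (d k)).tendsto_sum_nat
    obtain ⟨M0, hM0⟩ := (Metric.tendsto_atTop.mp htends) (r/3) (by linarith)
    obtain ⟨M1, hM1⟩ := exists_pow_lt_of_lt_one (show (0:ℝ) < r/3 by linarith)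
      (show (1/2 : ℝ) < 1 by norm_num)
    set M := max M0 M1 with hM_def
    set K := Nat.pair k M with hK_def
    have hmK : m K = M := by simp [hm_def, hK_def, Nat.unpair_pair]
    have hcK : c K = fun i => (d k : ∀ _ : ℕ, ℂ) i := by
      funext i; simp [hc_def, hK_def, Nat.unpair_pair]
    have hyK : y K = ∑ i ∈ Finset.range M, lp.single 2 i ((d k : ∀ _ : ℕ, ℂ) i) := by
      rw [hy_def]
      simp only [hmK, hcK, Rolewicz.blk, Nat.zero_add]
    have hKM : M ≤ K := Nat.right_le_pair k M
    -- analysis of the orbit point at time n K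
    set A := (l • S) ^ (n K) with hA_def
    have hAx : A (∑' j, term j) = ∑' j, A (term j) :=
      ContinuousLinearMap.map_tsum _ hsum
    have hfK : A (term K) = y K := by
      rw [hterm_def, map_smul, hA_def, hG_def,
        Rolewicz.pow_blk l S hS _ _ _ (le_refl _), Nat.sub_self, smul_smul,
        inv_mul_cancel₀ (pow_ne_zero _ hlne), one_smul, hy_def]
    have hflt : ∀ j, j < K → A (term j) = 0 := by
      intro j hj
      rw [hterm_def, map_smul, hA_def, hG_def,
        Rolewicz.pow_blk_zero l S hS _ _ _ (hmono j K hj), smul_zero]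
    have hfgt : ∀ j, K < j → ‖A (term j)‖ ≤ (1/2 : ℝ) ^ j := by
      intro j hj
      have hnK : n K ≤ n j := hle K j hj.le
      rw [hterm_def, map_smul, hA_def, hG_def, Rolewicz.pow_blk l S hS _ _ _ hnK]
      rw [norm_smul, norm_smul, norm_inv, norm_pow, norm_pow]
      have hblk : ‖Rolewicz.blk (n j - n K) (m j) (c j)‖ ≤ B j :=
        Rolewicz.norm_blk_le _ _ _
      have h2 := hpow K j hj
      rw [inv_mul_le_iff₀ (pow_pos hl0 _)]
      have h12 : (1/2 : ℝ) ^ j * 2 ^ j = 1 := by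
        rw [one_div, inv_pow, inv_mul_cancel₀ (by positivity)]
      calc ‖l‖ ^ n K * ‖Rolewicz.blk (n j - n K) (m j) (c j)‖
          ≤ ‖l‖ ^ n K * (B j + 1) := by
            refine mul_le_mul_of_nonneg_left ?_ (by positivity)
            linarith
        _ = (1/2 : ℝ) ^ j * (‖l‖ ^ n K * (2 ^ j * (B j + 1))) := by
            rw [show (1/2:ℝ)^j * (‖l‖ ^ n K * (2 ^ j * (B j + 1)))
              = ((1/2:ℝ)^j * 2^j) * (‖l‖ ^ n K * (B j + 1)) by ring, h12, one_mul]
        _ ≤ (1/2 : ℝ) ^ j * ‖l‖ ^ n j := mul_le_mul_of_nonneg_left h2.le (by positivity)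
        _ = ‖l‖ ^ n j * (1/2 : ℝ) ^ j := by ring
    -- tail estimate
    set g : ℕ → H2 := fun j => A (term j) - (if j = K then y K else 0) with hg_def
    have hfsumm : Summable fun j => A (term j) := hsum.mapL _
    have hδsumm : Summable fun j : ℕ => (if j = K then y K else 0) := by
      apply summable_of_ne_finset_zero (s := {K})
      intro j hj
      rw [if_neg (by simpa using hj)]
    have hgsum : ∑' j, g j = A (∑' j, term j) - y K := by
      rw [hg_def, Summable.tsum_sub hfsumm hδsumm, tsum_ite_eq, hAx]
    have hgle : ∀ j, ‖g j‖ ≤ (if j < K + 1 then 0 else (1/2 : ℝ) ^ j) := by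
      intro j
      rcases lt_trichotomy j K with hj | hj | hj
      · have hg0 : g j = 0 := by simp [hg_def, hflt j hj, hj.ne]
        rw [hg0, norm_zero, if_pos (by omega)]
      · subst hj
        have hg0 : g K = 0 := by simp [hg_def, hfK]
        rw [hg0, norm_zero, if_pos (by omega)]
      · have hgA : g j = A (term j) := by simp [hg_def, hj.ne']
        rw [hgA, if_neg (by omega)]
        exact hfgt j hj
    have hhsumm : Summable (fun j : ℕ => if j < K + 1 then 0 else (1/2 : ℝ) ^ j) := by
      refine Summable.of_nonneg_of_le (fun j => ?_) (fun j => ?_) hgeom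
      · split <;> positivity
      · split
        · positivity
        · exact le_refl _
    have hgnormsumm : Summable fun j => ‖g j‖ :=
      Summable.of_nonneg_of_le (fun j => norm_nonneg _) hgle hhsumm
    have hhtsum : ∑' j : ℕ, (if j < K + 1 then 0 else (1/2 : ℝ) ^ j) = (1/2 : ℝ) ^ K := by
      have hsplit := Summable.sum_add_tsum_nat_add (f := fun j : ℕ => if j < K + 1 then 0 else (1/2 : ℝ) ^ j)
        (K + 1) hhsumm
      have hz : (∑ i ∈ Finset.range (K + 1),
          (if i < K + 1 then 0 else (1/2 : ℝ) ^ i)) = 0 := by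
        refine Finset.sum_eq_zero fun i hi => ?_
        exact if_pos (Finset.mem_range.mp hi)
      rw [← hsplit, hz, zero_add]
      calc ∑' i : ℕ, (if i + (K + 1) < K + 1 then 0 else (1/2 : ℝ) ^ (i + (K + 1)))
          = ∑' i : ℕ, (1/2 : ℝ) ^ i * (1/2 : ℝ) ^ (K + 1) := by
            refine tsum_congr fun i => ?_
            rw [if_neg (by omega), pow_add]
        _ = (∑' i : ℕ, (1/2 : ℝ) ^ i) * (1/2 : ℝ) ^ (K + 1) := tsum_mul_right
        _ = (1/2 : ℝ) ^ K := by
            rw [tsum_geometric_of_lt_one (by norm_num) (by norm_num), pow_succ]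
            norm_num
            ring
    have hmain : ‖A (∑' j, term j) - y K‖ ≤ (1/2 : ℝ) ^ K := by
      rw [← hgsum, ← hhtsum]
      exact (norm_tsum_le_tsum_norm hgnormsumm).trans (Summable.tsum_le_tsum hgle hgnormsumm hhsumm)
    have hKbound : (1/2 : ℝ) ^ K < r/3 := by
      have h1 : (1/2 : ℝ) ^ K ≤ (1/2 : ℝ) ^ M1 :=
        pow_le_pow_of_le_one (by norm_num) (by norm_num) (le_trans (le_max_right M0 M1) hKM)
      linarith
    refine ⟨n K, ?_⟩
    have hd1 : dist z (d k) < r/3 := hk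
    have hd2 : dist (d k) (y K) < r/3 := by
      rw [hyK, dist_comm]
      exact hM0 M (le_max_left M0 M1)
    have hd3 : dist (y K) (A (∑' j, term j)) < r/3 := by
      rw [dist_eq_norm, norm_sub_rev]
      exact lt_of_le_of_lt hmain hKbound
    calc dist z (((l • S) ^ (n K)) (∑' j, term j))
        = dist z (A (∑' j, term j)) := by rw [hA_def]
      _ ≤ dist z (d k) + dist (d k) (y K) + dist (y K) (A (∑' j, term j)) :=
          dist_triangle4 _ _ _ _
      _ < r/3 + r/3 + r/3 := by linarith
      _ = r := by ring
  exact hdr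
end
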